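/- arXiv:alg-geom/9509009 — 2 statements merged into one kernel-verified Lean document; each statement's English description precedes it below -/
import Mathlib

section
/- For an Eulerian poset P of rank d, the polynomial H_Lef(P,t) := (1−t)^{−1}(G(P,t) − t^{d−1} G(P, t^{−1})) is a genuine polynomial of degree d−2 satisfying H_Lef(P,t) = t^{d−2} H_Lef(P, t^{−1}) and τ_{≤ (d−2)/2} H_Lef(P,t) = τ_{≤ (d−2)/2} H(P,t). -/
open Finset Polynomial
open scoped Classical


open Finset Polynomial
open scoped Classical

/-- The defining recursion of the Möbius function of a finite poset. -/
def MobiusRec {P : Type*} [PartialOrder P] [Fintype P] (mu : P → P → ℤ) : Prop :=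
  (∀ x : P, mu x x = 1) ∧
    ∀ x y : P, x < y → (∑ z : P, if x ≤ z ∧ z ≤ y then mu x z else 0) = 0

/-- A finite poset with rank function `ρ` is Eulerian if its Möbius function satisfies
`μ(x,y) = (-1)^(ρ(y) - ρ(x))` for all `x ≤ y`. -/
def IsEulerian {P : Type*} [PartialOrder P] [Fintype P] (ρ : P → ℕ) : Prop :=
  ∀ mu : P → P → ℤ, MobiusRec mu → ∀ x y : P, x ≤ y → mu x y = (-1 : ℤ) ^ (ρ y - ρ x)

/-- `ρ` is a rank function of rank `d`: `ρ(⊥) = 0`, `ρ(⊤) = d`, `ρ` is monotone and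
increases by one along covering relations. -/
def IsRankFunction {P : Type*} [PartialOrder P] [BoundedOrder P] (ρ : P → ℕ) (d : ℕ) : Prop :=
  ρ ⊥ = 0 ∧ ρ ⊤ = d ∧ Monotone ρ ∧ ∀ x y : P, x ⋖ y → ρ y = ρ x + 1

/-- The truncation operator `τ_{< d/2}`, keeping only the terms of degree `< d/2`
(that is, `2*i < d`). -/
noncomputable def truncLtHalf (d : ℕ) (p : Polynomial ℤ) : Polynomial ℤ :=
  ∑ i ∈ Finset.range (p.natDegree + 1),
    if 2 * i < d then Polynomial.C (p.coeff i) * Polynomial.X ^ i else 0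

/-- Stanley's polynomials `G([x,y],t)` and `H([x,y],t)` of the intervals of a finite graded
poset `P` with rank function `ρ`, given by the recursion: `G = H = 1` on rank-0 intervals,
`H([x,y],t) = ∑_{x < z ≤ y} (t-1)^(ρ(z)-ρ(x)-1) G([z,y],t)`, and
`G([x,y],t) = τ_{< (ρ(y)-ρ(x))/2} ((1-t) H([x,y],t))`. -/
def GHSystem {P : Type*} [PartialOrder P] [Fintype P] (ρ : P → ℕ)
    (G H : P → P → Polynomial ℤ) : Prop :=
  (∀ x : P, G x x = 1 ∧ H x x = 1) ∧
  (∀ x y : P, x < y →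
      H x y = ∑ z : P,
        if x < z ∧ z ≤ y then (Polynomial.X - 1) ^ (ρ z - ρ x - 1) * G z y else 0) ∧
  (∀ x y : P, x < y → G x y = truncLtHalf (ρ y - ρ x) ((1 - Polynomial.X) * H x y))

/-- The truncation operator `τ_{≤ (d-2)/2}`, keeping only the terms of degree `i` with
`2*i ≤ d - 2`. -/
noncomputable def truncLeHalf (d2 : ℕ) (p : Polynomial ℤ) : Polynomial ℤ :=
  ∑ i ∈ Finset.range (p.natDegree + 1),
    if 2 * i ≤ d2 then Polynomial.C (p.coeff i) * Polynomial.X ^ i else 0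

theorem coeff_sum_C_X (c : ℕ → ℤ) (n j : ℕ) :
    (∑ i ∈ Finset.range n, C (c i) * X ^ i).coeff j = if j < n then c j else 0 := by
  rw [Polynomial.finset_sum_coeff]
  simp only [Polynomial.coeff_C_mul, Polynomial.coeff_X_pow, mul_ite, mul_one, mul_zero]
  rw [Finset.sum_ite_eq (Finset.range n) j c]
  simp [Finset.mem_range]

theorem trunc_aux_coeff (cond : ℕ → Prop) [DecidablePred cond] (p : Polynomial ℤ) (j : ℕ) :
    (∑ i ∈ Finset.range (p.natDegree + 1),
      if cond i then C (p.coeff i) * X ^ i else 0).coeff j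
      = if cond j then p.coeff j else 0 := by
  rw [Polynomial.finset_sum_coeff]
  have step : ∀ i ∈ Finset.range (p.natDegree + 1),
      (if cond i then C (p.coeff i) * X ^ i else 0).coeff j
        = if j = i then (if cond i then p.coeff i else 0) else 0 := by
    intro i _
    split_ifs with h1 h2 h2 <;>
      simp [Polynomial.coeff_C_mul, Polynomial.coeff_X_pow, h1, h2]
  rw [Finset.sum_congr rfl step,
    Finset.sum_ite_eq (Finset.range (p.natDegree + 1)) j (fun i => if cond i then p.coeff i else 0)]
  by_cases hj : j ∈ Finset.range (p.natDegree + 1)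
  · rw [if_pos hj]
  · rw [if_neg hj]
    have : p.coeff j = 0 :=
      p.coeff_eq_zero_of_natDegree_lt (by simpa [Finset.mem_range, Nat.lt_succ_iff] using hj)
    simp [this]

theorem rank_lt {P : Type*} [PartialOrder P] [Fintype P] {ρ : P → ℕ}
    (hmono : Monotone ρ) (hcov : ∀ x y : P, x ⋖ y → ρ y = ρ x + 1)
    {x y : P} (h : x < y) : ρ x < ρ y := by
  obtain ⟨m, hm, hmin⟩ : ∃ m ∈ (Finset.univ.filter fun z : P => x < z ∧ z ≤ y),
      ∀ c ∈ (Finset.univ.filter fun z : P => x < z ∧ z ≤ y), ¬ c < m := by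
    obtain ⟨m, hm⟩ := exists_minimal_of_wellFoundedLT
      (· ∈ (Finset.univ.filter fun z : P => x < z ∧ z ≤ y)) ⟨y, by simp [h]⟩
    exact ⟨m, hm.1, fun c hc hcm => not_lt_of_ge (hm.2 hc hcm.le) hcm⟩
  simp only [Finset.mem_filter, Finset.mem_univ, true_and] at hm
  have hcovm : x ⋖ m := by
    refine ⟨hm.1, fun c hc1 hc2 => ?_⟩
    exact hmin c (by simp [hc1, le_of_lt (lt_of_lt_of_le hc2 hm.2)]) hc2
  have : ρ m = ρ x + 1 := hcov x m hcovm
  have : ρ m ≤ ρ y := hmono hm.2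
  omega

theorem eulerian_sum {P : Type*} [PartialOrder P] [Fintype P] {ρ : P → ℕ}
    (hE : IsEulerian ρ) (mu : P → P → ℤ) (hrec : MobiusRec mu)
    {x y : P} (hxy : x < y) :
    ∑ z ∈ Finset.univ.filter (fun z : P => x < z ∧ z ≤ y), (-1 : ℤ) ^ (ρ z - ρ x) = -1 := by
  have hmu := hE mu hrec
  have h0 := hrec.2 x y hxy
  rw [← Finset.sum_filter] at h0
  have hset : (Finset.univ.filter fun z : P => x ≤ z ∧ z ≤ y)
      = insert x (Finset.univ.filter fun z => x < z ∧ z ≤ y) := by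
    ext z
    simp only [Finset.mem_filter, Finset.mem_univ, true_and, Finset.mem_insert]
    constructor
    · rintro ⟨h1, h2⟩
      rcases h1.lt_or_eq with hh | hh
      · exact Or.inr ⟨hh, h2⟩
      · exact Or.inl hh.symm
    · rintro (rfl | ⟨h1, h2⟩)
      · exact ⟨le_refl _, le_of_lt hxy⟩
      · exact ⟨le_of_lt h1, h2⟩
  rw [hset, Finset.sum_insert (by simp)] at h0
  rw [hrec.1 x] at h0
  have hterm : ∀ z ∈ Finset.univ.filter (fun z : P => x < z ∧ z ≤ y),
      mu x z = (-1 : ℤ) ^ (ρ z - ρ x) := by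
    intro z hz
    simp only [Finset.mem_filter, Finset.mem_univ, true_and] at hz
    exact hmu x z (le_of_lt hz.1)
  rw [Finset.sum_congr rfl hterm] at h0
  linarith
noncomputable def muAux {P : Type*} [PartialOrder P] [Fintype P] (x : P) (y : P) : ℤ :=
  if x = y then 1
  else if x < y then
    -(∑ z ∈ (Finset.univ.filter fun z => x ≤ z ∧ z < y).attach, muAux x z.1)
  else 0
termination_by (Finset.univ.filter fun z : P => z < y).card
decreasing_by
  have hz := z.2
  simp only [Finset.mem_filter, Finset.mem_univ, true_and] at hz
  apply Finset.card_lt_card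
  constructor
  · intro w hw
    simp only [Finset.mem_filter, Finset.mem_univ, true_and] at hw ⊢
    exact hw.trans hz.2
  · intro hsub
    have := hsub (Finset.mem_filter.2 ⟨Finset.mem_univ _, hz.2⟩)
    simp only [Finset.mem_filter, Finset.mem_univ, true_and] at this
    exact lt_irrefl _ this

theorem muAux_rec {P : Type*} [PartialOrder P] [Fintype P] : MobiusRec (muAux (P := P)) := by
  constructor
  · intro x; rw [muAux]; simp
  · intro x y hxy
    have key : muAux x y = -(∑ z ∈ Finset.univ.filter fun z => x ≤ z ∧ z < y, muAux x z) := by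
      rw [muAux, if_neg (ne_of_lt hxy), if_pos hxy,
        Finset.sum_attach (Finset.univ.filter fun z => x ≤ z ∧ z < y) (muAux x)]
    rw [← Finset.sum_filter]
    have hset : (Finset.univ.filter fun z : P => x ≤ z ∧ z ≤ y)
        = insert y (Finset.univ.filter fun z => x ≤ z ∧ z < y) := by
      ext z
      simp only [Finset.mem_filter, Finset.mem_univ, true_and, Finset.mem_insert]
      constructor
      · rintro ⟨h1, h2⟩
        rcases h2.lt_or_eq with h | h
        · exact Or.inr ⟨h1, h⟩
        · exact Or.inl h
      · rintro (rfl | ⟨h1, h2⟩)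
        · exact ⟨le_of_lt hxy, le_refl _⟩
        · exact ⟨h1, le_of_lt h2⟩
    rw [hset, Finset.sum_insert (by simp), key]
    ring

theorem truncLtHalf_coeff (d : ℕ) (p : Polynomial ℤ) (j : ℕ) :
    (truncLtHalf d p).coeff j = if 2 * j < d then p.coeff j else 0 := by
  rw [truncLtHalf]; exact trunc_aux_coeff (fun i => 2 * i < d) p j

theorem truncLeHalf_coeff (d2 : ℕ) (p : Polynomial ℤ) (j : ℕ) :
    (truncLeHalf d2 p).coeff j = if 2 * j ≤ d2 then p.coeff j else 0 := by
  rw [truncLeHalf]; exact trunc_aux_coeff (fun i => 2 * i ≤ d2) p j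

theorem one_sub_X_mul_coeff (p : Polynomial ℤ) (j : ℕ) :
    ((1 - X) * p).coeff j = p.coeff j - (if j = 0 then 0 else p.coeff (j - 1)) := by
  rw [sub_mul, one_mul, Polynomial.coeff_sub]
  cases j with
  | zero => simp [Polynomial.mul_coeff_zero]
  | succ n => simp [Polynomial.coeff_X_mul]

theorem H_coeff_zero {P : Type*} [PartialOrder P] [Fintype P] {ρ : P → ℕ}
    (hmono : Monotone ρ) (hcov : ∀ x y : P, x ⋖ y → ρ y = ρ x + 1)
    (hE : IsEulerian ρ) {G H : P → P → Polynomial ℤ} (hGH : GHSystem ρ G H)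
    {x y : P} (hxy : x < y) (hG1 : ∀ z, x < z → z ≤ y → (G z y).coeff 0 = 1) :
    (H x y).coeff 0 = 1 := by
  rw [hGH.2.1 x y hxy, Polynomial.finset_sum_coeff]
  simp only [apply_ite (fun q : Polynomial ℤ => q.coeff 0), Polynomial.coeff_zero]
  rw [← Finset.sum_filter]
  have step : ∀ z ∈ Finset.univ.filter (fun z : P => x < z ∧ z ≤ y),
      ((X - 1 : Polynomial ℤ) ^ (ρ z - ρ x - 1) * G z y).coeff 0
        = -((-1 : ℤ) ^ (ρ z - ρ x)) := by
    intro z hz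
    simp only [Finset.mem_filter, Finset.mem_univ, true_and] at hz
    rw [Polynomial.mul_coeff_zero, hG1 z hz.1 hz.2, mul_one]
    have hc : ((X - 1 : Polynomial ℤ) ^ (ρ z - ρ x - 1)).coeff 0
        = (-1 : ℤ) ^ (ρ z - ρ x - 1) := by
      rw [← Polynomial.constantCoeff_apply, map_pow]
      norm_num [Polynomial.constantCoeff_apply]
    rw [hc]
    have hrz : ρ x < ρ z := rank_lt hmono hcov hz.1
    obtain ⟨n, hn2⟩ : ∃ n, ρ z - ρ x = n + 1 := ⟨ρ z - ρ x - 1, by omega⟩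
    rw [hn2]; simp [pow_succ]
  rw [Finset.sum_congr rfl step, Finset.sum_neg_distrib,
    eulerian_sum hE muAux muAux_rec hxy]
  norm_num

theorem G_coeff_zero {P : Type*} [PartialOrder P] [Fintype P] {ρ : P → ℕ}
    (hmono : Monotone ρ) (hcov : ∀ x y : P, x ⋖ y → ρ y = ρ x + 1)
    (hE : IsEulerian ρ) {G H : P → P → Polynomial ℤ} (hGH : GHSystem ρ G H) :
    ∀ x y : P, x ≤ y → (G x y).coeff 0 = 1 := by
  have wf : WellFounded ((· > ·) : P → P → Prop) :=
    (Finite.to_wellFoundedGT).wf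
  intro x
  induction x using wf.induction with
  | _ x IH =>
    intro y hxy
    rcases hxy.lt_or_eq with hlt | rfl
    · have hH : (H x y).coeff 0 = 1 :=
        H_coeff_zero hmono hcov hE hGH hlt (fun z hz1 hz2 => IH z hz1 y hz2)
      rw [hGH.2.2 x y hlt, truncLtHalf_coeff,
        if_pos (by simpa using rank_lt hmono hcov hlt), one_sub_X_mul_coeff]
      simp [hH]
    · rw [(hGH.1 x).1]; simp

/-- For an Eulerian poset `P` of rank `d ≥ 2`, the rational function
`H_Lef(P,t) := (1-t)⁻¹ (G(P,t) - t^(d-1) G(P,t⁻¹))` is a genuine polynomial `L` of degree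
`d-2` satisfying `L(t) = t^(d-2) L(t⁻¹)` and `τ_{≤(d-2)/2} L = τ_{≤(d-2)/2} H(P,t)`. -/
theorem H_Lef_exists {P : Type*} [PartialOrder P] [BoundedOrder P] [Fintype P]
    (ρ : P → ℕ) (d : ℕ) (hrk : IsRankFunction ρ d) (hE : IsEulerian ρ)
    (G H : P → P → Polynomial ℤ) (hGH : GHSystem ρ G H) (hd : 2 ≤ d) :
    ∃ L : Polynomial ℤ,
      (1 - Polynomial.X) * L = G ⊥ ⊤ - (G ⊥ ⊤).reflect (d - 1) ∧
      L.natDegree = d - 2 ∧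
      L = L.reflect (d - 2) ∧
      truncLeHalf (d - 2) L = truncLeHalf (d - 2) (H ⊥ ⊤) := by
  obtain ⟨hb0, ht0, hmono, hcov⟩ := hrk
  set h : ℕ → ℤ := fun i => (H ⊥ ⊤).coeff i with hh
  have hbt : (⊥ : P) < ⊤ := by
    rcases (bot_le : (⊥:P) ≤ ⊤).lt_or_eq with hlt | heq
    · exact hlt
    · exfalso; rw [heq] at hb0; omega
  have hrank : ρ (⊤:P) - ρ (⊥:P) = d := by omega
  have hgval : ∀ i, (G ⊥ ⊤).coeff i
      = if 2 * i < d then (h i - if i = 0 then 0 else h (i-1)) else 0 := by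
    intro i
    rw [hGH.2.2 ⊥ ⊤ hbt, hrank, truncLtHalf_coeff, one_sub_X_mul_coeff]
  have h0 : h 0 = 1 := H_coeff_zero hmono hcov hE hGH hbt
      (fun z hz1 hz2 => G_coeff_zero hmono hcov hE hGH z ⊤ hz2)
  set L : Polynomial ℤ := ∑ j ∈ Finset.range (d-1), C (h (min j (d-2-j))) * X ^ j with hL
  have hLcoeff : ∀ j, L.coeff j = if j < d-1 then h (min j (d-2-j)) else 0 := by
    intro j
    exact coeff_sum_C_X (fun i => h (min i (d-2-i))) (d-1) j
  refine ⟨L, ?_, ?_, ?_, ?_⟩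
  · ext j
    rw [one_sub_X_mul_coeff, Polynomial.coeff_sub, Polynomial.coeff_reflect]
    by_cases hjd : j ≤ d - 1
    · rw [Polynomial.revAt_le hjd]
      simp only [hLcoeff, hgval, Nat.min_def]
      split_ifs <;> try omega
      all_goals (
        try rw [show h (d - 1 - j - 1) = h (d - 2 - j) by
          rw [show d - 1 - j - 1 = d - 2 - j by omega]]
        try rw [show h (d - 2 - (j - 1)) = h (d - 1 - j) by
          rw [show d - 2 - (j - 1) = d - 1 - j by omega]]
        try rw [show h (d - 2 - j) = h (j - 1) by
          rw [show d - 2 - j = j - 1 by omega]]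
        try rw [show h (d - 1 - j) = h j by
          rw [show d - 1 - j = j by omega]]
        try rw [show h (d - 1 - j) = h (j - 1) by
          rw [show d - 1 - j = j - 1 by omega]]
        omega)
    · have hrev : revAt (d-1) j = j := by
        exact Polynomial.revAt_eq_self_of_lt (by omega)
      rw [hrev]
      simp only [hLcoeff, hgval]
      split_ifs <;> omega
  · apply le_antisymm
    · rw [Polynomial.natDegree_le_iff_coeff_eq_zero]
      intro N hN
      rw [hLcoeff, if_neg (by omega)]
    · apply Polynomial.le_natDegree_of_ne_zero
      rw [hLcoeff, if_pos (by omega),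
        show min (d-2) (d-2-(d-2)) = 0 by omega, h0]
      exact one_ne_zero
  · ext j
    rw [Polynomial.coeff_reflect]
    by_cases hjd : j ≤ d - 2
    · rw [Polynomial.revAt_le hjd, hLcoeff, hLcoeff]
      rw [if_pos (by omega), if_pos (by omega),
        show min (d-2-j) (d-2-(d-2-j)) = min j (d-2-j) by omega]
    · have hrev : revAt (d-2) j = j := by
        exact Polynomial.revAt_eq_self_of_lt (by omega)
      rw [hrev]
  · ext j
    rw [truncLeHalf_coeff, truncLeHalf_coeff]
    by_cases hj : 2*j ≤ d-2
    · rw [if_pos hj, if_pos hj, hLcoeff, if_pos (by omega),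
        show min j (d-2-j) = j by omega]
    · rw [if_neg hj, if_neg hj]
end

section
/- Let C ⊂ M̄_R be a reflexive Gorenstein cone of dimension d̄ = d + r with dual reflexive Gorenstein cone C* ⊂ N̄_R, and let V, W be the Calabi-Yau complete intersections of dimension d − r associated to a nef-partition and its dual. Then the string-theoretic E-polynomials given by the formula E_st(V;u,v) = Σ_{(m,n) ∈ Λ(C,C*)} (u/v)^{deg m} · ((−1)^{ρ(x*(n))}/(uv)^r) (v−u)^{ρ(x(m))} B(P*_{(m,n)}; u,v) (uv−1)^{d̄ − ρ(x*(n))} · (1/(uv))^{deg n} satisfy the mirror duality E_st(V;u,v) = (−u)^{d−r} E_st(W; u^{−1}, v). -/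
open Finset
open scoped Classical BigOperators
set_option synthInstance.maxHeartbeats 1000000
set_option maxHeartbeats 1000000

/-- The convex polyhedral cone generated by a finite set `s` of vectors. -/
def coneGen {d : ℕ} (s : Finset (Fin d → ℝ)) : Set (Fin d → ℝ) :=
  { x | ∃ c : (Fin d → ℝ) → ℝ, (∀ v, 0 ≤ c v) ∧ x = ∑ v ∈ s, c v • v }

/-- `F` is a face of the cone `C`: it is cut out on `C` by a linear functional which is
nonnegative on `C`. -/
def IsFaceOf {d : ℕ} (C F : Set (Fin d → ℝ)) : Prop :=
  ∃ u : (Fin d → ℝ) →ₗ[ℝ] ℝ, (∀ x ∈ C, 0 ≤ u x) ∧ F = {x ∈ C | u x = 0}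

/-- The dimension of (the linear span of) a face. -/
noncomputable def faceDim {d : ℕ} (F : Set (Fin d → ℝ)) : ℕ :=
  Module.finrank ℝ (Submodule.span ℝ F)

/-- The canonical pairing `⟨x,y⟩ = ∑ᵢ xᵢ yᵢ` identifying `ℝ^d` with its dual. -/
def pairR {d : ℕ} (x y : Fin d → ℝ) : ℝ := ∑ i, x i * y i

/-- The dual cone `C* = {y : ⟨x,y⟩ ≥ 0 for all x ∈ C}`. -/
def dualCone {d : ℕ} (C : Set (Fin d → ℝ)) : Set (Fin d → ℝ) :=
  { y | ∀ x ∈ C, 0 ≤ pairR x y }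

/-- The face of the dual cone dual to a face `F` of `C`:
`F* = {y ∈ C* : ⟨x,y⟩ = 0 for all x ∈ F}`. -/
def dualFace {d : ℕ} (C F : Set (Fin d → ℝ)) : Set (Fin d → ℝ) :=
  { y ∈ dualCone C | ∀ x ∈ F, pairR x y = 0 }

/-- The canonical embedding of lattice points `ℤ^d → ℝ^d`. -/
def castR {d : ℕ} (m : Fin d → ℤ) : Fin d → ℝ := fun i => (m i : ℝ)

/-- The integral pairing `⟨m,n⟩ = ∑ᵢ mᵢ nᵢ` between the dual lattices `M` and `N`. -/
def pz {d : ℕ} (m n : Fin d → ℤ) : ℤ := ∑ i, m i * n i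

/-- The relative interior of a closed convex cone `C`: the points of `C` not lying on any
proper face. -/
def relint {d : ℕ} (C : Set (Fin d → ℝ)) : Set (Fin d → ℝ) :=
  { x ∈ C | ∀ u : (Fin d → ℝ) →ₗ[ℝ] ℝ,
      (∀ y ∈ C, 0 ≤ u y) → u x = 0 → ∀ y ∈ C, u y = 0 }

/-- The field of rational functions in two variables `u`, `v` over `ℤ`. -/
noncomputable abbrev KK : Type := FractionRing (MvPolynomial (Fin 2) ℤ)

/-- The variable `u`. -/
noncomputable def UU : KK := algebraMap (MvPolynomial (Fin 2) ℤ) KK (MvPolynomial.X 0)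

/-- The variable `v`. -/
noncomputable def VV : KK := algebraMap (MvPolynomial (Fin 2) ℤ) KK (MvPolynomial.X 1)

/-- Evaluation of a two-variable polynomial `b(u,v)` at a pair of elements of `KK`. -/
noncomputable def evB (b : MvPolynomial (Fin 2) ℤ) (u v : KK) : KK :=
  MvPolynomial.aeval ![u, v] b

/-- The minimal face of the cone `C` containing a point `x`. -/
def minFace {d : ℕ} (C : Set (Fin d → ℝ)) (x : Fin d → ℝ) : Set (Fin d → ℝ) :=
  ⋂₀ {F | IsFaceOf C F ∧ x ∈ F}

/-- `ρ(x(m))`: the dimension of the minimal face of `C` containing `m`. -/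
noncomputable def rhoMin {d : ℕ} (C : Set (Fin d → ℝ)) (x : Fin d → ℝ) : ℕ :=
  faceDim (minFace C x)

/-- `ρ(x*(n))`: the dimension of the intersection of `C` with the hyperplane `⟨·,n⟩ = 0`. -/
noncomputable def rhoPerp {d : ℕ} (C : Set (Fin d → ℝ)) (n : Fin d → ℝ) : ℕ :=
  faceDim (C ∩ {x | pairR x n = 0})

/-- `Λ(C,C*) = {(m,n) ∈ M̄ × N̄ : m ∈ C, n ∈ C*, ⟨m,n⟩ = 0}`. -/
def LambdaSet {d : ℕ} (C : Set (Fin d → ℝ)) : Set ((Fin d → ℤ) × (Fin d → ℤ)) :=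
  { p | castR p.1 ∈ C ∧ castR p.2 ∈ dualCone C ∧ pz p.1 p.2 = 0 }

/-- The coefficient of `u^i v^j` (for `i j : ℤ`) of a two-variable polynomial. -/
noncomputable def mcoeff (q : MvPolynomial (Fin 2) ℤ) (i j : ℤ) : ℤ :=
  if 0 ≤ i ∧ 0 ≤ j then
    MvPolynomial.coeff (Finsupp.single 0 i.toNat + Finsupp.single 1 j.toNat) q
  else 0

/-- The polynomial part of the summand `A_{(m,n)}(u,v)`:
`(-1)^(ρ(x*(n))) (v-u)^(ρ(x(m))) B(P*_{(m,n)};u,v) (uv-1)^(d̄-ρ(x*(n)))`. -/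
noncomputable def Apoly (rm rperp dbar : ℕ) (Bmn : MvPolynomial (Fin 2) ℤ) :
    MvPolynomial (Fin 2) ℤ :=
  (-1) ^ rperp * (MvPolynomial.X 1 - MvPolynomial.X 0) ^ rm * Bmn *
    (MvPolynomial.X 0 * MvPolynomial.X 1 - 1) ^ (dbar - rperp)

/-- The coefficient of `u^a v^b` in the string-theoretic `E`-polynomial
`E_st(V;u,v) = ∑_{(m,n) ∈ Λ(C,C*)} (u/v)^(deg m) A_{(m,n)}(u,v) (uv)^(-deg n)`, where
`A_{(m,n)}(u,v)` carries the extra factor `(uv)^(-r)`.  Here `deg m = ⟨m,n_C⟩` and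
`deg n = ⟨m_{C*},n⟩`. -/
noncomputable def EstCoeff {dbar : ℕ} (r : ℕ) (C : Set (Fin dbar → ℝ))
    (nC mC : Fin dbar → ℤ)
    (B : (Fin dbar → ℤ) → (Fin dbar → ℤ) → MvPolynomial (Fin 2) ℤ) (a b : ℤ) : ℤ :=
  ∑ᶠ p ∈ LambdaSet C,
    mcoeff (Apoly (rhoMin C (castR p.1)) (rhoPerp C (castR p.2)) dbar (B p.1 p.2))
      (a - (pz p.1 nC - pz mC p.2 - r)) (b - (-(pz p.1 nC) - pz mC p.2 - r))

section Geo
variable {d : ℕ}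

def pairL (y : Fin d → ℝ) : (Fin d → ℝ) →ₗ[ℝ] ℝ where
  toFun x := pairR x y
  map_add' x z := by simp [pairR, add_mul, Finset.sum_add_distrib]
  map_smul' a x := by simp [pairR, Finset.mul_sum, mul_assoc]

lemma pairL_apply (y x : Fin d → ℝ) : pairL y x = pairR x y := rfl

lemma pairR_comm (x y : Fin d → ℝ) : pairR x y = pairR y x := by
  simp [pairR, mul_comm]

lemma pairR_sum_left (t : Finset (Fin d → ℝ)) (c : (Fin d → ℝ) → ℝ) (y : Fin d → ℝ) :
    pairR (∑ v ∈ t, c v • v) y = ∑ v ∈ t, c v * pairR v y := by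
  rw [← pairL_apply, map_sum]
  refine Finset.sum_congr rfl fun v _ => ?_
  rw [map_smul, smul_eq_mul, pairL_apply]

lemma mem_coneGen_of_mem {t : Finset (Fin d → ℝ)} {v : Fin d → ℝ} (hv : v ∈ t) :
    v ∈ coneGen t := by
  refine ⟨fun w => if w = v then 1 else 0, fun w => by by_cases h : w = v <;> simp [h], ?_⟩
  have : ∀ w ∈ t, (if w = v then (1:ℝ) else 0) • w = if w = v then w else 0 := by
    intro w _; split <;> simp
  rw [Finset.sum_congr rfl this, Finset.sum_ite_eq' t v (fun w => w), if_pos hv]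

lemma coneGen_mono {s t : Finset (Fin d → ℝ)} (h : s ⊆ t) : coneGen s ⊆ coneGen t := by
  rintro x ⟨c, hc, rfl⟩
  refine ⟨fun v => if v ∈ s then c v else 0, fun v => by by_cases h : v ∈ s <;> simp [h, hc v], ?_⟩
  rw [← Finset.sum_subset h]
  · exact Finset.sum_congr rfl fun v hv => by
      show c v • v = (if v ∈ s then c v else 0) • v
      rw [if_pos hv]
  · intro v _ hv
    show (if v ∈ s then c v else 0) • v = 0
    rw [if_neg hv, zero_smul]

lemma zero_mem_coneGen (t : Finset (Fin d → ℝ)) : (0 : Fin d → ℝ) ∈ coneGen t :=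
  ⟨fun _ => 0, fun _ => le_refl 0, by simp⟩

lemma coneGen_add {t : Finset (Fin d → ℝ)} {x y : Fin d → ℝ}
    (hx : x ∈ coneGen t) (hy : y ∈ coneGen t) : x + y ∈ coneGen t := by
  obtain ⟨c, hc, rfl⟩ := hx
  obtain ⟨c', hc', rfl⟩ := hy
  exact ⟨fun v => c v + c' v, fun v => add_nonneg (hc v) (hc' v), by
    rw [← Finset.sum_add_distrib]
    exact Finset.sum_congr rfl fun v _ => (add_smul _ _ _).symm⟩

lemma coneGen_smul {t : Finset (Fin d → ℝ)} {a : ℝ} (ha : 0 ≤ a) {x : Fin d → ℝ}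
    (hx : x ∈ coneGen t) : a • x ∈ coneGen t := by
  obtain ⟨c, hc, rfl⟩ := hx
  exact ⟨fun v => a * c v, fun v => mul_nonneg ha (hc v), by
    rw [Finset.smul_sum]
    exact Finset.sum_congr rfl fun v _ => (smul_smul _ _ _)⟩

lemma mem_dualCone_coneGen_iff {t : Finset (Fin d → ℝ)} {y : Fin d → ℝ} :
    y ∈ dualCone (coneGen t) ↔ ∀ v ∈ t, 0 ≤ pairR v y := by
  constructor
  · intro h v hv
    exact h v (mem_coneGen_of_mem hv)
  · rintro h x ⟨c, hc, rfl⟩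
    rw [pairR_sum_left]
    exact Finset.sum_nonneg fun v hv => mul_nonneg (hc v) (h v hv)

lemma span_coneGen (t : Finset (Fin d → ℝ)) :
    Submodule.span ℝ (coneGen t) = Submodule.span ℝ (t : Set (Fin d → ℝ)) := by
  apply le_antisymm
  · rw [Submodule.span_le]
    rintro x ⟨c, hc, rfl⟩
    exact Submodule.sum_mem _ fun v hv =>
      Submodule.smul_mem _ _ (Submodule.subset_span hv)
  · exact Submodule.span_mono fun v hv => mem_coneGen_of_mem hv

lemma reduce_step {s : Finset (Fin d → ℝ)} {x : Fin d → ℝ} (hx : x ∈ coneGen s)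
    (g : {v // v ∈ s} → ℝ) (hg0 : ∑ i, g i • (i : Fin d → ℝ) = 0)
    (i₀ : {v // v ∈ s}) (hi₀ : 0 < g i₀) :
    ∃ v₀ ∈ s, x ∈ coneGen (s.erase v₀) := by
  obtain ⟨c, hc, rfl⟩ := hx
  set gbar : (Fin d → ℝ) → ℝ := fun v => if h : v ∈ s then g ⟨v, h⟩ else 0 with hgbar
  have hgbar_sum : ∑ v ∈ s, gbar v • v = 0 := by
    rw [← Finset.sum_coe_sort s (fun v => gbar v • v)]
    rw [← hg0]
    refine Finset.sum_congr rfl fun i _ => ?_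
    simp [hgbar, dif_pos i.2]
  set P : Finset (Fin d → ℝ) := s.filter (fun v => 0 < gbar v) with hP
  have hPne : (↑i₀ : Fin d → ℝ) ∈ P := by
    rw [hP, Finset.mem_filter]
    exact ⟨i₀.2, by simp [hgbar, dif_pos i₀.2, hi₀]⟩
  obtain ⟨v₀, hv₀P, hmin⟩ := Finset.exists_min_image P (fun v => c v / gbar v) ⟨_, hPne⟩
  have hv₀s : v₀ ∈ s := Finset.mem_of_mem_filter _ hv₀P
  have hgv₀ : 0 < gbar v₀ := (Finset.mem_filter.mp hv₀P).2
  set lam := c v₀ / gbar v₀ with hlam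
  have hlam0 : 0 ≤ lam := div_nonneg (hc v₀) hgv₀.le
  set c' : (Fin d → ℝ) → ℝ := fun v => c v - lam * gbar v with hc'
  have hc'0 : ∀ v, 0 ≤ c' v := by
    intro v
    show 0 ≤ c v - lam * gbar v
    by_cases hvs : v ∈ s
    · by_cases hgv : 0 < gbar v
      · have hvP : v ∈ P := Finset.mem_filter.mpr ⟨hvs, hgv⟩
        have h2 : lam * gbar v ≤ c v := by
          rw [← le_div_iff₀ hgv]
          exact hmin v hvP
        linarith
      · have h2 : lam * gbar v ≤ 0 :=
          mul_nonpos_of_nonneg_of_nonpos hlam0 (not_lt.mp hgv)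
        have h3 := hc v
        linarith
    · have h2 : gbar v = 0 := dif_neg hvs
      rw [h2, mul_zero, sub_zero]
      exact hc v
  have hrep : ∑ v ∈ s, c v • v = ∑ v ∈ s, c' v • v := by
    have : ∑ v ∈ s, c' v • v = (∑ v ∈ s, c v • v) - lam • ∑ v ∈ s, gbar v • v := by
      rw [Finset.smul_sum, ← Finset.sum_sub_distrib]
      refine Finset.sum_congr rfl fun v _ => ?_
      rw [hc', sub_smul, smul_smul]
    rw [this, hgbar_sum, smul_zero, sub_zero]
  have hc'v₀ : c' v₀ = 0 := by
    show c v₀ - lam * gbar v₀ = 0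
    rw [hlam, div_mul_cancel₀ _ hgv₀.ne', sub_self]
  refine ⟨v₀, hv₀s, ⟨c', hc'0, ?_⟩⟩
  rw [hrep]
  rw [Finset.sum_erase s (by rw [hc'v₀, zero_smul])]

lemma carath : ∀ (n : ℕ) (s : Finset (Fin d → ℝ)), s.card ≤ n → ∀ x ∈ coneGen s,
    ∃ t, t ⊆ s ∧ LinearIndependent ℝ (fun v : {v // v ∈ t} => (v : Fin d → ℝ))
      ∧ x ∈ coneGen t := by
  intro n
  induction n with
  | zero =>
    intro s hs x hx
    have : s = ∅ := Finset.card_eq_zero.mp (Nat.le_zero.mp hs)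
    subst this
    refine ⟨∅, Finset.Subset.refl _, ?_, hx⟩
    haveI : IsEmpty {v // v ∈ (∅ : Finset (Fin d → ℝ))} := by
      simp [Finset.isEmpty_coe_sort]
      exact ⟨fun v => v.2⟩
    exact linearIndependent_empty_type
  | succ n ih =>
    intro s hs x hx
    by_cases hli : LinearIndependent ℝ (fun v : {v // v ∈ s} => (v : Fin d → ℝ))
    · exact ⟨s, Finset.Subset.refl _, hli, hx⟩
    · obtain ⟨g, hg0, i₀, hi₀⟩ := Fintype.not_linearIndependent_iff.mp hli
      have hstep : ∃ v₀ ∈ s, x ∈ coneGen (s.erase v₀) := by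
        rcases lt_or_gt_of_ne hi₀ with hneg | hpos
        · refine reduce_step hx (-g) ?_ i₀ (by simpa using hneg)
          simp only [Pi.neg_apply, neg_smul, ← Finset.sum_neg_distrib]
          rw [← neg_zero, ← hg0]
          rw [Finset.sum_neg_distrib]
        · exact reduce_step hx g hg0 i₀ hpos
      obtain ⟨v₀, hv₀, hxe⟩ := hstep
      have hcard : (s.erase v₀).card ≤ n := by
        rw [Finset.card_erase_of_mem hv₀]
        omega
      obtain ⟨t, hts, htli, hxt⟩ := ih (s.erase v₀) hcard x hxe
      exact ⟨t, hts.trans (Finset.erase_subset _ _), htli, hxt⟩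

lemma isClosed_coneGen_li (t : Finset (Fin d → ℝ))
    (hli : LinearIndependent ℝ (fun v : {v // v ∈ t} => (v : Fin d → ℝ))) :
    IsClosed (coneGen t) := by
  set f : ({v // v ∈ t} → ℝ) →ₗ[ℝ] (Fin d → ℝ) :=
    { toFun := fun c => ∑ i, c i • (i : Fin d → ℝ)
      map_add' := by
        intro c c'
        simp [add_smul, Finset.sum_add_distrib]
      map_smul' := by
        intro a c
        simp [smul_smul, Finset.smul_sum] } with hf
  have hker : LinearMap.ker f = ⊥ := by
    rw [LinearMap.ker_eq_bot']
    intro c hc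
    exact funext (Fintype.linearIndependent_iff.mp hli c hc)
  have hemb : Topology.IsClosedEmbedding f := LinearMap.isClosedEmbedding_of_injective hker
  have horth : IsClosed {c : {v // v ∈ t} → ℝ | ∀ i, 0 ≤ c i} := by
    have : {c : {v // v ∈ t} → ℝ | ∀ i, 0 ≤ c i}
        = ⋂ i, (fun c : {v // v ∈ t} → ℝ => c i) ⁻¹' (Set.Ici 0) := by
      ext c; simp [Set.mem_iInter]
    rw [this]
    exact isClosed_iInter fun i => isClosed_Ici.preimage (continuous_apply i)
  have himg : coneGen t = f '' {c | ∀ i, 0 ≤ c i} := by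
    ext x
    constructor
    · rintro ⟨c, hc, rfl⟩
      refine ⟨fun i => c ↑i, fun i => hc _, ?_⟩
      have hfc : f (fun i => c ↑i) = ∑ i : {v // v ∈ t}, c ↑i • (i : Fin d → ℝ) := rfl
      rw [hfc, Finset.sum_coe_sort t (fun v => c v • v)]
    · rintro ⟨c, hc, rfl⟩
      refine ⟨fun v => if h : v ∈ t then c ⟨v, h⟩ else 0, fun v => by
        show 0 ≤ if h : v ∈ t then c ⟨v, h⟩ else 0
        by_cases h : v ∈ t
        · rw [dif_pos h]; exact hc _
        · rw [dif_neg h], ?_⟩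
      show f c = ∑ v ∈ t, (if h : v ∈ t then c ⟨v, h⟩ else 0) • v
      rw [← Finset.sum_coe_sort t (fun v => (if h : v ∈ t then c ⟨v, h⟩ else 0) • v)]
      have hfc : f c = ∑ i : {v // v ∈ t}, c i • (i : Fin d → ℝ) := rfl
      rw [hfc]
      refine Finset.sum_congr rfl fun i _ => ?_
      rw [dif_pos i.2]
  rw [himg]
  exact hemb.isClosedMap _ horth

lemma isClosed_coneGen (s : Finset (Fin d → ℝ)) : IsClosed (coneGen s) := by
  have hrw : coneGen s = ⋃ t ∈ ((s.powerset.filter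
      (fun t => LinearIndependent ℝ (fun v : {v // v ∈ t} => (v : Fin d → ℝ)))) :
        Finset (Finset (Fin d → ℝ))), coneGen t := by
    ext x
    simp only [Set.mem_iUnion]
    constructor
    · intro hx
      obtain ⟨t, hts, htli, hxt⟩ := carath s.card s le_rfl x hx
      exact ⟨t, Finset.mem_filter.mpr ⟨Finset.mem_powerset.mpr hts, htli⟩, hxt⟩
    · rintro ⟨t, htm, hxt⟩
      exact coneGen_mono (Finset.mem_powerset.mp (Finset.mem_filter.mp htm).1) hxt
  rw [hrw]
  refine Set.Finite.isClosed_biUnion (Finset.finite_toSet _) fun t ht => ?_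
  exact isClosed_coneGen_li t (Finset.mem_filter.mp ht).2

lemma dualCone_dualCone_coneGen (s : Finset (Fin d → ℝ)) :
    dualCone (dualCone (coneGen s)) = coneGen s := by
  apply Set.Subset.antisymm
  · intro z hz
    by_contra hzK
    let eqv : EuclideanSpace ℝ (Fin d) ≃L[ℝ] (Fin d → ℝ) := EuclideanSpace.equiv (Fin d) ℝ
    have heqv : ∀ x : EuclideanSpace ℝ (Fin d), ∀ i, eqv x i = x i := fun x i => rfl
    have hinner : ∀ x y : EuclideanSpace ℝ (Fin d),
        (inner ℝ x y : ℝ) = pairR (eqv x) (eqv y) := by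
      intro x y
      rw [PiLp.inner_apply]
      simp [pairR, RCLike.inner_apply, heqv, mul_comm]
    set K : ConvexCone ℝ (EuclideanSpace ℝ (Fin d)) :=
      { carrier := (⇑eqv) ⁻¹' coneGen s
        smul_mem' := by
          intro c hc y hy
          simp only [Set.mem_preimage, map_smul] at *
          exact coneGen_smul hc.le hy
        add_mem' := by
          intro y hy z hz
          simp only [Set.mem_preimage, map_add] at *
          exact coneGen_add hy hz } with hK
    have hKne : (K : Set (EuclideanSpace ℝ (Fin d))).Nonempty :=
      ⟨0, by simp only [hK]; show eqv 0 ∈ coneGen s; rw [map_zero]; exact zero_mem_coneGen s⟩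
    have hKcl : IsClosed (K : Set (EuclideanSpace ℝ (Fin d))) :=
      (isClosed_coneGen s).preimage eqv.continuous
    have hb : eqv.symm z ∉ K := by
      intro hmem
      apply hzK
      have : eqv (eqv.symm z) ∈ coneGen s := hmem
      rwa [eqv.apply_symm_apply] at this
    let P : ProperCone ℝ (EuclideanSpace ℝ (Fin d)) :=
      { carrier := (⇑eqv) ⁻¹' coneGen s
        add_mem' := fun hy hz => K.add_mem' hy hz
        zero_mem' := by
          show eqv 0 ∈ coneGen s
          rw [map_zero]; exact zero_mem_coneGen s
        smul_mem' := by
          intro c y hy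
          show eqv ((c : ℝ) • y) ∈ coneGen s
          rw [map_smul]
          exact coneGen_smul c.2 hy
        isClosed' := hKcl }
    obtain ⟨y, hy1, hy2⟩ := P.hyperplane_separation' (x₀ := eqv.symm z) hb
    have hy' : eqv y ∈ dualCone (coneGen s) := by
      intro x hx
      have hmem : eqv.symm x ∈ K := by
        show eqv (eqv.symm x) ∈ coneGen s
        rwa [eqv.apply_symm_apply]
      have := hy1 _ hmem
      rwa [hinner, eqv.apply_symm_apply] at this
    have h1 : 0 ≤ pairR (eqv y) z := hz (eqv y) hy'
    have h2 : pairR (eqv y) z < 0 := by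
      have := hy2
      rwa [hinner, eqv.apply_symm_apply] at this
    linarith
  · intro x hx y hy
    rw [pairR_comm]
    exact hy x hx
end Geo

section FaceDuality
variable {d : ℕ}

lemma pairR_sum_right (t : Finset (Fin d → ℝ)) (x : Fin d → ℝ) :
    pairR x (∑ n ∈ t, n) = ∑ n ∈ t, pairR x n := by
  rw [pairR_comm]
  have h1 : (∑ n ∈ t, n) = ∑ n ∈ t, (1:ℝ) • n := by simp
  rw [h1, pairR_sum_left]
  refine Finset.sum_congr rfl fun n _ => ?_
  rw [one_mul, pairR_comm]

lemma pairR_add_right (x y z : Fin d → ℝ) :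
    pairR x (y + z) = pairR x y + pairR x z := by
  rw [pairR_comm, ← pairL_apply, map_add, pairL_apply, pairL_apply, pairR_comm x y,
    pairR_comm x z]

lemma pairR_smul_right (a : ℝ) (x y : Fin d → ℝ) :
    pairR x (a • y) = a * pairR x y := by
  rw [pairR_comm, ← pairL_apply, map_smul, smul_eq_mul, pairL_apply, pairR_comm]

lemma pairR_self_eq_zero {y : Fin d → ℝ} (h : pairR y y = 0) : y = 0 := by
  have hz := (Finset.sum_eq_zero_iff_of_nonneg
    (fun i _ => mul_self_nonneg (y i))).mp h
  funext i
  exact mul_self_eq_zero.mp (hz i (Finset.mem_univ i))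

/-- The central face-dimension duality for finitely generated cones. -/
lemma faceDim_add_faceDim (T : Finset (Fin d → ℝ)) (K : Set (Fin d → ℝ))
    (hdK : dualCone K = coneGen T) (hbd : dualCone (coneGen T) = K)
    {p : Fin d → ℝ} (hp : p ∈ K) :
    faceDim (minFace K p) + faceDim (dualCone K ∩ {y | pairR y p = 0}) = d := by
  classical
  set T0 : Finset (Fin d → ℝ) := T.filter (fun n => pairR p n = 0) with hT0
  have hTdual : ∀ n ∈ T, n ∈ dualCone K := by
    intro n hn
    rw [hdK]
    exact mem_coneGen_of_mem hn
  have hpT : ∀ n ∈ T, 0 ≤ pairR p n := fun n hn => (hTdual n hn) p hp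
  -- K* ∩ p^⊥ = coneGen T0
  have hcap : dualCone K ∩ {y | pairR y p = 0} = coneGen T0 := by
    apply Set.Subset.antisymm
    · rintro y ⟨hy1, hy2⟩
      rw [hdK] at hy1
      obtain ⟨c, hc, rfl⟩ := hy1
      have hy2' : ∑ v ∈ T, c v * pairR p v = 0 := by
        have he : pairR (∑ v ∈ T, c v • v) p = ∑ v ∈ T, c v * pairR v p :=
          pairR_sum_left T c p
        have hy2'' : pairR (∑ v ∈ T, c v • v) p = 0 := hy2
        rw [he] at hy2''
        rw [← hy2'']
        exact Finset.sum_congr rfl fun v _ => by rw [pairR_comm]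
      have hzero : ∀ v ∈ T, c v * pairR p v = 0 :=
        (Finset.sum_eq_zero_iff_of_nonneg
          (fun v hv => mul_nonneg (hc v) (hpT v hv))).mp hy2'
      refine ⟨c, hc, (Finset.sum_subset
        (Finset.filter_subset (fun n => pairR p n = 0) T) ?_).symm⟩
      intro v hvT hvT0
      have hpv : pairR p v ≠ 0 := fun h0 =>
        hvT0 (Finset.mem_filter.mpr ⟨hvT, h0⟩)
      have hcv : c v = 0 := by
        rcases mul_eq_zero.mp (hzero v hvT) with h | h
        · exact h
        · exact absurd h hpv
      rw [hcv, zero_smul]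
    · intro y hy
      constructor
      · rw [hdK]
        exact coneGen_mono (Finset.filter_subset _ _) hy
      · obtain ⟨c, hc, rfl⟩ := hy
        show pairR _ p = 0
        rw [pairR_sum_left]
        apply Finset.sum_eq_zero
        intro v hv
        rw [pairR_comm, (Finset.mem_filter.mp hv).2, mul_zero]
  set W : Submodule ℝ (Fin d → ℝ) := Submodule.span ℝ ((T0 : Set (Fin d → ℝ))) with hW
  have hspan2 : Submodule.span ℝ (dualCone K ∩ {y | pairR y p = 0}) = W := by
    rw [hcap, span_coneGen]
  set F : Set (Fin d → ℝ) := {x ∈ K | ∀ n ∈ T0, pairR x n = 0} with hF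
  have hT0dual : ∀ n ∈ T0, n ∈ dualCone K := fun n hn =>
    hTdual n (Finset.filter_subset _ _ hn)
  have hface : IsFaceOf K F := by
    refine ⟨pairL (∑ n ∈ T0, n), ?_, ?_⟩
    · intro x hx
      rw [pairL_apply, pairR_sum_right]
      exact Finset.sum_nonneg fun n hn => (hT0dual n hn) x hx
    · ext x
      simp only [hF, Set.mem_setOf_eq, pairL_apply]
      constructor
      · rintro ⟨hxK, hx0⟩
        refine ⟨hxK, ?_⟩
        rw [pairR_sum_right]
        exact Finset.sum_eq_zero hx0
      · rintro ⟨hxK, hx0⟩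
        refine ⟨hxK, ?_⟩
        rw [pairR_sum_right] at hx0
        exact (Finset.sum_eq_zero_iff_of_nonneg
          (fun n hn => (hT0dual n hn) x hxK)).mp hx0
  have hpF : p ∈ F := ⟨hp, fun n hn => (Finset.mem_filter.mp hn).2⟩
  have hmin : minFace K p = F := by
    apply Set.Subset.antisymm
    · exact Set.sInter_subset_of_mem ⟨hface, hpF⟩
    · intro x hx
      apply Set.mem_sInter.mpr
      rintro G ⟨⟨u, hu, rfl⟩, hpG⟩
      set w : Fin d → ℝ := fun i => u (fun j => if i = j then 1 else 0) with hwdef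
      have hwpair : ∀ z, pairR z w = u z := by
        intro z
        conv_rhs => rw [pi_eq_sum_univ z]
        rw [map_sum, pairR]
        refine Finset.sum_congr rfl fun i _ => ?_
        rw [map_smul, smul_eq_mul]
      have hwdual : w ∈ dualCone K := by
        intro z hz
        rw [hwpair z]
        exact hu z hz
      have hwperp : pairR w p = 0 := by
        rw [pairR_comm, hwpair]
        exact hpG.2
      have hwmem : w ∈ coneGen T0 := by
        rw [← hcap]
        exact ⟨hwdual, hwperp⟩
      obtain ⟨cw, hcw, hwrep⟩ := hwmem
      refine ⟨hx.1, ?_⟩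
      rw [← hwpair x, hwrep, pairR_comm, pairR_sum_left]
      apply Finset.sum_eq_zero
      intro v hv
      rw [pairR_comm, hx.2 v hv, mul_zero]
  set U : Submodule ℝ (Fin d → ℝ) := ⨅ n ∈ T0, LinearMap.ker (pairL n) with hU
  have hUmem : ∀ x, x ∈ U ↔ ∀ n ∈ T0, pairR x n = 0 := by
    intro x
    simp only [hU, Submodule.mem_iInf, LinearMap.mem_ker]
    rfl
  have hspanF : Submodule.span ℝ F = U := by
    apply le_antisymm
    · rw [Submodule.span_le]
      intro x hx
      rw [SetLike.mem_coe, hUmem]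
      exact hx.2
    · intro x hx
      rw [hUmem] at hx
      have hKmem : ∀ z, (∀ n ∈ T, 0 ≤ pairR n z) → z ∈ K := by
        intro z hz
        rw [← hbd]
        exact mem_dualCone_coneGen_iff.mpr hz
      have hlin : ∀ (ε : ℝ) (n : Fin d → ℝ),
          pairR n (p + ε • x) = pairR p n + ε * pairR x n := by
        intro ε n
        rw [pairR_comm, ← pairL_apply, map_add, map_smul, smul_eq_mul,
          pairL_apply, pairL_apply]
      obtain ⟨ε, hε, hεK⟩ : ∃ ε : ℝ, 0 < ε ∧ p + ε • x ∈ K := by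
        by_cases hne : (T \ T0).Nonempty
        · set ε := (T \ T0).inf' hne (fun n => pairR p n / (|pairR x n| + 1)) with hεdef
          have hppos : ∀ n ∈ T \ T0, 0 < pairR p n := by
            intro n hn
            rw [Finset.mem_sdiff] at hn
            have h1 : pairR p n ≠ 0 := fun h0 =>
              hn.2 (Finset.mem_filter.mpr ⟨hn.1, h0⟩)
            exact lt_of_le_of_ne (hpT n hn.1) (Ne.symm h1)
          have hpos : 0 < ε := by
            rw [hεdef, Finset.lt_inf'_iff]
            intro n hn
            have := hppos n hn
            positivity
          refine ⟨ε, hpos, hKmem _ ?_⟩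
          intro n hn
          rw [hlin]
          by_cases hnT0 : n ∈ T0
          · rw [(Finset.mem_filter.mp hnT0).2, hx n hnT0, mul_zero, add_zero]
          · have hmem : n ∈ T \ T0 := Finset.mem_sdiff.mpr ⟨hn, hnT0⟩
            have hle : ε ≤ pairR p n / (|pairR x n| + 1) := Finset.inf'_le _ hmem
            have hA : 0 < pairR p n := hppos n hmem
            have habs : (0:ℝ) < |pairR x n| + 1 := by positivity
            have h3 : ε * (|pairR x n| + 1) ≤ pairR p n := (le_div_iff₀ habs).mp hle
            nlinarith [mul_nonneg hpos.le
              (show (0:ℝ) ≤ pairR x n + |pairR x n| by nlinarith [neg_abs_le (pairR x n)])]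
        · refine ⟨1, one_pos, hKmem _ ?_⟩
          intro n hn
          have hnT0 : n ∈ T0 := by
            by_contra hno
            exact hne ⟨n, Finset.mem_sdiff.mpr ⟨hn, hno⟩⟩
          rw [hlin, (Finset.mem_filter.mp hnT0).2, hx n hnT0, mul_zero, add_zero]
      have hpFx : p + ε • x ∈ F := by
        refine ⟨hεK, ?_⟩
        intro n hn
        rw [pairR_comm, hlin, (Finset.mem_filter.mp hn).2, hx n hn, mul_zero, add_zero]
      have hx' : x = ε⁻¹ • ((p + ε • x) - p) := by
        rw [add_sub_cancel_left, smul_smul, inv_mul_cancel₀ hε.ne', one_smul]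
      rw [hx']
      exact Submodule.smul_mem _ _ (Submodule.sub_mem _
        (Submodule.subset_span hpFx) (Submodule.subset_span hpF))
  -- dimension counting
  set Φ : (Fin d → ℝ) →ₗ[ℝ] Module.Dual ℝ (Fin d → ℝ) :=
    { toFun := fun y => pairL y
      map_add' := by
        intro y z
        ext x
        simp [pairL_apply, pairR_add_right]
      map_smul' := by
        intro a y
        ext x
        simp [pairL_apply, pairR_smul_right] } with hΦ
  have hΦzero : ∀ y, Φ y = 0 → y = 0 := by
    intro y hy
    apply pairR_self_eq_zero
    have : (Φ y) y = 0 := by rw [hy]; rfl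
    exact this
  have hΦinj : Function.Injective Φ := by
    intro a b h
    have h0 : Φ (a - b) = 0 := by rw [map_sub, h, sub_self]
    have := hΦzero _ h0
    exact sub_eq_zero.mp this
  set WD : Submodule ℝ (Module.Dual ℝ (Fin d → ℝ)) := W.map Φ with hWD
  have hfr1 : Module.finrank ℝ WD = Module.finrank ℝ W :=
    (LinearEquiv.finrank_eq (Submodule.equivMapOfInjective Φ hΦinj W)).symm
  have hUco : U = WD.dualCoannihilator := by
    ext x
    rw [Submodule.mem_dualCoannihilator, hUmem]
    constructor
    · intro hxT0 φ hφ
      obtain ⟨w, hwW, rfl⟩ := Submodule.mem_map.mp hφ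
      clear hφ
      show pairR x w = 0
      induction hwW using Submodule.span_induction with
      | mem n hn =>
        exact hxT0 n (by exact_mod_cast hn)
      | zero => simp [pairR]
      | add a b ha hb iha ihb => rw [pairR_add_right, iha, ihb, add_zero]
      | smul r a ha iha => rw [pairR_smul_right, iha, mul_zero]
    · intro hφ n hn
      have hmem : Φ n ∈ WD :=
        Submodule.mem_map_of_mem (Submodule.subset_span (by exact_mod_cast hn))
      exact hφ _ hmem
  have hfr2 : Module.finrank ℝ WD + Module.finrank ℝ WD.dualCoannihilator = d := by
    rw [Subspace.finrank_add_finrank_dualCoannihilator_eq WD, Module.finrank_fin_fun]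
  have e1 : faceDim (minFace K p) = Module.finrank ℝ U := by
    rw [faceDim, hmin, hspanF]
  have e2 : faceDim (dualCone K ∩ {y | pairR y p = 0}) = Module.finrank ℝ W := by
    rw [faceDim, hspan2]
  rw [e1, e2, hUco]
  omega
end FaceDuality


section Alg
open MvPolynomial

lemma phi_injective : Function.Injective (algebraMap (MvPolynomial (Fin 2) ℤ) KK) :=
  IsFractionRing.injective _ _

lemma UU_ne_zero : UU ≠ 0 := by
  have h : (X 0 : MvPolynomial (Fin 2) ℤ) ≠ 0 := X_ne_zero 0
  simp only [UU, ne_eq, map_eq_zero_iff _ phi_injective]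
  exact h

lemma evB_UU_VV (b : MvPolynomial (Fin 2) ℤ) :
    evB b UU VV = algebraMap (MvPolynomial (Fin 2) ℤ) KK b := by
  have h : ((aeval (R := ℤ) (σ := Fin 2) ![UU, VV] :
        MvPolynomial (Fin 2) ℤ →ₐ[ℤ] KK) : MvPolynomial (Fin 2) ℤ →+* KK)
      = algebraMap (MvPolynomial (Fin 2) ℤ) KK := by
    apply MvPolynomial.ringHom_ext
    · intro r
      simp only [RingHom.coe_coe, aeval_C, algebraMap_int_eq, eq_intCast, map_intCast]
    · intro i
      fin_cases i <;> simp [UU, VV]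
  exact DFunLike.congr_fun h b

lemma fin2_finsupp_eq (e : Fin 2 →₀ ℕ) :
    e = Finsupp.single 0 (e 0) + Finsupp.single 1 (e 1) := by
  ext i
  rw [Finsupp.add_apply, Finsupp.single_apply, Finsupp.single_apply]
  fin_cases i <;> simp

lemma fin2_add_apply0 (a b : ℕ) :
    ((Finsupp.single (0 : Fin 2) a + Finsupp.single 1 b : Fin 2 →₀ ℕ)) 0 = a := by
  rw [Finsupp.add_apply, Finsupp.single_apply, Finsupp.single_apply]
  simp

lemma fin2_add_apply1 (a b : ℕ) :
    ((Finsupp.single (0 : Fin 2) a + Finsupp.single 1 b : Fin 2 →₀ ℕ)) 1 = b := by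
  rw [Finsupp.add_apply, Finsupp.single_apply, Finsupp.single_apply]
  simp

lemma fin2_add_inj {a b a' b' : ℕ}
    (h : Finsupp.single (0 : Fin 2) a + Finsupp.single 1 b
       = Finsupp.single (0 : Fin 2) a' + Finsupp.single 1 b') : a = a' ∧ b = b' := by
  constructor
  · have := congrArg (fun f : Fin 2 →₀ ℕ => f 0) h
    simpa [fin2_add_apply0] using this
  · have := congrArg (fun f : Fin 2 →₀ ℕ => f 1) h
    simpa [fin2_add_apply1] using this

lemma evB_expand (q : MvPolynomial (Fin 2) ℤ) (u v : KK) :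
    evB q u v = ∑ e ∈ q.support, ((MvPolynomial.coeff e q : ℤ) : KK) * u ^ (e 0) * v ^ (e 1) := by
  rw [evB, aeval_def, eval₂_eq]
  refine Finset.sum_congr rfl fun e _ => ?_
  have hprod : (∏ i ∈ e.support, (![u, v] i) ^ e i) = ∏ i : Fin 2, (![u, v] i) ^ e i := by
    refine Finset.prod_subset (Finset.subset_univ _) ?_
    intro i _ hi
    rw [Finsupp.notMem_support_iff.mp hi, pow_zero]
  rw [hprod, Fin.prod_univ_two]
  have : algebraMap ℤ KK (coeff e q) = ((coeff e q : ℤ) : KK) := by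
    simp [algebraMap_int_eq, eq_intCast]
  rw [this]
  simp [Matrix.cons_val_zero, Matrix.cons_val_one, Matrix.head_cons, mul_assoc]

lemma monomial_fin2 (a b : ℕ) (c : ℤ) :
    (monomial (Finsupp.single (0:Fin 2) a + Finsupp.single 1 b) c : MvPolynomial (Fin 2) ℤ)
      = C c * X 0 ^ a * X 1 ^ b := by
  rw [X_pow_eq_monomial, X_pow_eq_monomial, C_mul_monomial, monomial_mul]
  simp

/-- Key algebra lemma: a reversal identity at the level of `evB` implies the
coefficientwise identity. -/
lemma mcoeff_reverse {A A' : MvPolynomial (Fin 2) ℤ} {D : ℕ}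
    (h : evB A UU VV = (-1) ^ D * UU ^ D * evB A' UU⁻¹ VV) :
    ∀ i j : ℤ, mcoeff A i j = (-1) ^ D * mcoeff A' ((D : ℤ) - i) j := by
  classical
  set N : ℕ := max D (A'.degreeOf 0) with hN
  have hDN : D ≤ N := le_max_left _ _
  have hdegN : A'.degreeOf 0 ≤ N := le_max_right _ _
  set φ := algebraMap (MvPolynomial (Fin 2) ℤ) KK with hφ
  set M : MvPolynomial (Fin 2) ℤ := ∑ e ∈ A'.support,
      monomial (Finsupp.single 0 (N - e 0) + Finsupp.single 1 (e 1)) (coeff e A') with hM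
  have hesupp : ∀ e ∈ A'.support, e 0 ≤ N := by
    intro e he
    calc e 0 ≤ A'.degreeOf 0 := by
          rw [degreeOf_eq_sup]; exact Finset.le_sup (f := fun m : Fin 2 →₀ ℕ => m 0) he
    _ ≤ N := hdegN
  have hφmon : ∀ (a b : ℕ) (c : ℤ),
      φ (monomial (Finsupp.single 0 a + Finsupp.single 1 b) c)
        = (c : KK) * UU ^ a * VV ^ b := by
    intro a b c
    rw [monomial_fin2, map_mul, map_mul, map_pow, map_pow]
    have hc : φ (C c) = (c : KK) := by
      rw [show (C c : MvPolynomial (Fin 2) ℤ) = ((c : ℤ) : MvPolynomial (Fin 2) ℤ) from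
        (eq_intCast (C : ℤ →+* MvPolynomial (Fin 2) ℤ) c).symm ▸ rfl, map_intCast]
    rw [hc]
    rfl
  -- Claim 1 : UU^N * evB A' UU⁻¹ VV = φ M
  have hclaim1 : UU ^ N * evB A' UU⁻¹ VV = φ M := by
    rw [evB_expand, Finset.mul_sum, hM, map_sum]
    refine Finset.sum_congr rfl fun e he => ?_
    rw [hφmon]
    have h1 : (UU⁻¹ : KK) ^ (e 0) = (UU ^ (e 0))⁻¹ := by rw [inv_pow]
    have h2 : UU ^ (N - e 0) = UU ^ N * (UU ^ (e 0))⁻¹ :=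
      pow_sub₀ UU UU_ne_zero (hesupp e he)
    rw [h2, h1]
    ring
  -- Claim 2 : A * X0^(N-D) = (-1)^D * M
  have hclaim2 : A * X 0 ^ (N - D) = (-1) ^ D * M := by
    apply phi_injective
    have hXU : φ (X 0 ^ (N - D)) = UU ^ (N - D) := by rw [map_pow]; rfl
    calc φ (A * X 0 ^ (N - D)) = evB A UU VV * UU ^ (N - D) := by
          rw [map_mul, hXU, ← evB_UU_VV]
    _ = ((-1) ^ D * UU ^ D * evB A' UU⁻¹ VV) * UU ^ (N - D) := by rw [h]
    _ = (-1) ^ D * (UU ^ D * UU ^ (N - D) * evB A' UU⁻¹ VV) := by ring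
    _ = (-1) ^ D * (UU ^ N * evB A' UU⁻¹ VV) := by
          rw [← pow_add, show D + (N - D) = N from by omega]
    _ = (-1) ^ D * φ M := by rw [hclaim1]
    _ = φ ((-1) ^ D * M) := by rw [map_mul, map_pow, map_neg, map_one]
  have hcoeffM : ∀ a b : ℕ, coeff (Finsupp.single 0 a + Finsupp.single 1 b) M
      = if a ≤ N then coeff (Finsupp.single 0 (N - a) + Finsupp.single 1 b) A' else 0 := by
    intro a b
    rw [hM, MvPolynomial.coeff_sum]
    simp only [coeff_monomial]
    by_cases haN : a ≤ N
    · rw [if_pos haN]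
      rw [Finset.sum_eq_single (Finsupp.single (0 : Fin 2) (N - a) + Finsupp.single 1 b)]
      · rw [if_pos]
        rw [fin2_add_apply0, fin2_add_apply1]
        congr 2
        omega
      · intro e he hne
        rw [if_neg]
        intro hcontra
        apply hne
        have h0 := hesupp e he
        obtain ⟨h0', h1'⟩ := fin2_add_inj hcontra
        have he0 : e 0 = N - a := by omega
        conv_lhs => rw [fin2_finsupp_eq e, he0, h1']
      · intro hns
        rw [if_pos, MvPolynomial.notMem_support_iff.mp hns]
        rw [fin2_add_apply0, fin2_add_apply1]
        congr 2
        omega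
    · rw [if_neg haN]
      apply Finset.sum_eq_zero
      intro e he
      rw [if_neg]
      intro hcontra
      obtain ⟨h0', _⟩ := fin2_add_inj hcontra
      have := hesupp e he
      omega
  -- master coefficient equation
  have E : ∀ a b : ℕ,
      (if N - D ≤ a then coeff (Finsupp.single 0 (a - (N - D)) + Finsupp.single 1 b) A else 0)
      = (-1) ^ D *
        (if a ≤ N then coeff (Finsupp.single 0 (N - a) + Finsupp.single 1 b) A' else 0) := by
    intro a b
    have hthis := congrArg (coeff (Finsupp.single (0 : Fin 2) a + Finsupp.single 1 b)) hclaim2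
    rw [X_pow_eq_monomial, coeff_mul_monomial'] at hthis
    have hsignC : ((-1 : MvPolynomial (Fin 2) ℤ) ^ D) = C ((-1 : ℤ) ^ D) := by
      rw [map_pow, map_neg, map_one]
    rw [hsignC, coeff_C_mul, hcoeffM] at hthis
    rw [← hthis]
    by_cases hle : (Finsupp.single (0 : Fin 2) (N - D) : Fin 2 →₀ ℕ)
        ≤ Finsupp.single 0 a + Finsupp.single 1 b
    · rw [if_pos hle]
      have hle' : N - D ≤ a := by
        have := Finsupp.single_le_iff.mp hle
        rwa [fin2_add_apply0] at this
      rw [if_pos hle', mul_one]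
      congr 1
      refine Finsupp.ext fun i => ?_
      simp only [Finsupp.tsub_apply, Finsupp.add_apply, Finsupp.single_apply]
      fin_cases i <;> simp
    · rw [if_neg hle]
      have hle' : ¬ (N - D ≤ a) := by
        intro hc
        exact hle (Finsupp.single_le_iff.mpr (by rwa [fin2_add_apply0]))
      rw [if_neg hle']
  have hA'big : ∀ (k : ℕ) (b : ℕ), N < k →
      coeff (Finsupp.single 0 k + Finsupp.single 1 b) A' = 0 := by
    intro k b hk
    by_contra hne
    have hmem : (Finsupp.single (0:Fin 2) k + Finsupp.single 1 b) ∈ A'.support :=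
      MvPolynomial.mem_support_iff.mpr hne
    have := hesupp _ hmem
    rw [fin2_add_apply0] at this
    omega
  intro i j
  by_cases hj : 0 ≤ j
  · by_cases hi : 0 ≤ i
    · by_cases hiD : i ≤ (D : ℤ)
      · have hDi : (0:ℤ) ≤ (D : ℤ) - i := by omega
        rw [mcoeff, if_pos ⟨hi, hj⟩, mcoeff, if_pos ⟨hDi, hj⟩]
        have hE := E (i.toNat + (N - D)) j.toNat
        rw [if_pos (by omega), if_pos (by omega)] at hE
        have h1 : i.toNat + (N - D) - (N - D) = i.toNat := by omega
        have h2 : N - (i.toNat + (N - D)) = ((D:ℤ) - i).toNat := by omega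
        rw [h1, h2] at hE
        exact hE
      · rw [mcoeff, if_pos ⟨hi, hj⟩, mcoeff, if_neg (by omega)]
        have hE := E (i.toNat + (N - D)) j.toNat
        rw [if_pos (by omega), if_neg (by omega)] at hE
        have h1 : i.toNat + (N - D) - (N - D) = i.toNat := by omega
        rw [h1, mul_zero] at hE
        rw [hE, mul_zero]
    · rw [mcoeff, if_neg (by tauto)]
      rw [mcoeff, if_pos ⟨by omega, hj⟩]
      set t : ℕ := ((D : ℤ) - i).toNat with ht
      have htD : D < t := by omega
      by_cases htN : t ≤ N
      · have hE := E (N - t) j.toNat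
        rw [if_neg (by omega), if_pos (by omega)] at hE
        have h2 : N - (N - t) = t := by omega
        rw [h2] at hE
        rcases mul_eq_zero.mp hE.symm with hc | hc
        · exfalso
          exact pow_ne_zero D (by norm_num : (-1:ℤ) ≠ 0) hc
        · rw [hc, mul_zero]
      · rw [hA'big t j.toNat (by omega), mul_zero]
  · rw [mcoeff, if_neg (by tauto), mcoeff, if_neg (by tauto), mul_zero]

lemma evB_Apoly (P : MvPolynomial (Fin 2) ℤ) (u v : KK) (r1 r2 db : ℕ) :
    evB (Apoly r1 r2 db P) u v
      = (-1) ^ r2 * (v - u) ^ r1 * evB P u v * (u * v - 1) ^ (db - r2) := by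
  simp only [Apoly, evB, map_mul, map_pow, map_sub, map_one, map_neg, aeval_X,
    Matrix.cons_val_zero, Matrix.cons_val_one, Matrix.head_cons]

/-- The field identity for `Apoly`. -/
lemma star_identity {ρm ρn D : ℕ} (hmn : ρm ≤ ρn) (hnD : ρn ≤ D)
    {Bp Bq : MvPolynomial (Fin 2) ℤ}
    (h : evB Bp UU VV = (-UU) ^ (ρn - ρm) * evB Bq UU⁻¹ VV) :
    evB (Apoly ρm ρn D Bp) UU VV
      = (-1) ^ D * UU ^ D * evB (Apoly (D - ρn) (D - ρm) D Bq) UU⁻¹ VV := by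
  obtain ⟨c, hc⟩ : ∃ c, ρn = ρm + c := ⟨ρn - ρm, by omega⟩
  obtain ⟨e, he⟩ : ∃ e, D = ρn + e := ⟨D - ρn, by omega⟩
  have h1 : ρn - ρm = c := by omega
  have h2 : D - ρn = e := by omega
  have h3 : D - ρm = c + e := by omega
  have h4 : D - (c + e) = ρm := by omega
  have h5 : D = ρm + c + e := by omega
  rw [h1] at h
  rw [evB_Apoly, evB_Apoly, h, h2, h3, h4]
  have hU : UU ≠ 0 := UU_ne_zero
  have k1 : VV - UU⁻¹ = (UU * VV - 1) * UU⁻¹ := by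
    rw [sub_mul, one_mul, mul_comm UU VV, mul_assoc, mul_inv_cancel₀ hU, mul_one]
  have k2 : UU⁻¹ * VV - 1 = (VV - UU) * UU⁻¹ := by
    rw [sub_mul, mul_inv_cancel₀ hU, mul_comm VV UU⁻¹]
  rw [k1, k2, mul_pow, mul_pow]
  rw [show (-UU : KK) = (-1) * UU by ring]
  rw [hc, h5]
  simp only [mul_pow, pow_add, inv_pow]
  have h2c : ((-1:KK)) ^ (c * 2) = 1 := by rw [mul_comm, pow_mul]; norm_num
  have h2e : ((-1:KK)) ^ (e * 2) = 1 := by rw [mul_comm, pow_mul]; norm_num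
  field_simp
  ring_nf
  simp only [h2c, h2e, mul_one]
end Alg

section MainAux

lemma finsum_mem_neg_int {α : Type*} (S : Set α) (f : α → ℤ) :
    ∑ᶠ p ∈ S, (-(f p)) = - ∑ᶠ p ∈ S, f p := by
  rw [finsum_mem_def, finsum_mem_def, ← finsum_neg_distrib]
  congr 1
  funext p
  by_cases hp : p ∈ S <;> simp [Set.indicator, hp]

lemma pz_comm {d : ℕ} (m n : Fin d → ℤ) : pz m n = pz n m :=
  Finset.sum_congr rfl fun i _ => mul_comm _ _

lemma pairR_castR {d : ℕ} (m n : Fin d → ℤ) :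
    pairR (castR m) (castR n) = (pz m n : ℝ) := by
  rw [pairR, pz]
  push_cast
  rfl

end MainAux

/-- Mirror duality for string-theoretic Hodge numbers: for dual reflexive Gorenstein cones
`C`, `C*` of dimension `d̄ = d + r` arising from a nef-partition and its dual, the
string-theoretic `E`-polynomials of the associated `(d-r)`-dimensional Calabi-Yau complete
intersections `V` and `W`, given by the explicit sum over `Λ(C,C*)`, satisfy
`E_st(V;u,v) = (-u)^(d-r) E_st(W;u⁻¹,v)`, stated here coefficientwise: the coefficient of
`u^a v^b` in `E_st(V)` equals `(-1)^(d-r)` times the coefficient of `u^(d-r-a) v^b` in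
`E_st(W)`.  The `B`-polynomials of the posets `P*_{(m,n)}` enter through the assignments
`Bp` (for `V`) and `Bq` (for `W`), related by the duality
`B(P;u,v) = (-u)^(rank P) B(P*;u⁻¹,v)`. -/
theorem mirror_duality_Est {dbar : ℕ} (r : ℕ) (h2r : 2 * r ≤ dbar)
    (s : Finset (Fin dbar → ℤ))
    (C : Set (Fin dbar → ℝ)) (hC : C = coneGen (s.image castR))
    (hfull : Submodule.span ℝ C = ⊤)
    (hpointed : ∀ x ∈ C, -x ∈ C → x = 0)
    (nC mC : Fin dbar → ℤ)
    (hgorC : ∀ m ∈ s, pz m nC = 1)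
    (hposC : ∀ x ∈ C, x ≠ 0 → 0 < ∑ i, x i * (nC i : ℝ))
    (sD : Finset (Fin dbar → ℤ))
    (hD : dualCone C = coneGen (sD.image castR))
    (hgorD : ∀ n ∈ sD, pz mC n = 1)
    (hposD : ∀ y ∈ dualCone C, y ≠ 0 → 0 < ∑ i, y i * (mC i : ℝ))
    (hidx : pz mC nC = (r : ℤ))
    (Bp Bq : (Fin dbar → ℤ) → (Fin dbar → ℤ) → MvPolynomial (Fin 2) ℤ)
    (hdual : ∀ m n : Fin dbar → ℤ, (m, n) ∈ LambdaSet C →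
      evB (Bp m n) UU VV
        = (-UU) ^ (rhoPerp C (castR n) - rhoMin C (castR m)) * evB (Bq n m) UU⁻¹ VV) :
    ∀ a b : ℤ,
      EstCoeff r C nC mC Bp a b
        = (-1 : ℤ) ^ (dbar - 2 * r) *
            EstCoeff r (dualCone C) mC nC Bq (((dbar : ℤ) - 2 * r) - a) b := by
  classical
  intro a b
  have hbid : dualCone (dualCone C) = C := by
    rw [hC]
    exact dualCone_dualCone_coneGen _
  -- swap description of the dual Lambda set
  have hswap : LambdaSet (dualCone C) = Prod.swap '' (LambdaSet C) := by
    rw [Set.image_swap_eq_preimage_swap]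
    ext q
    simp only [LambdaSet, Set.mem_setOf_eq, Set.mem_preimage, Prod.fst_swap, Prod.snd_swap]
    rw [hbid]
    constructor
    · rintro ⟨h1, h2, h3⟩
      exact ⟨h2, h1, by rw [pz_comm]; exact h3⟩
    · rintro ⟨h1, h2, h3⟩
      exact ⟨h2, h1, by rw [pz_comm]; exact h3⟩
  set f : (Fin dbar → ℤ) × (Fin dbar → ℤ) → ℤ := fun p =>
    mcoeff (Apoly (rhoMin C (castR p.1)) (rhoPerp C (castR p.2)) dbar (Bp p.1 p.2))
      (a - (pz p.1 nC - pz mC p.2 - r)) (b - (-(pz p.1 nC) - pz mC p.2 - r)) with hf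
  set g : (Fin dbar → ℤ) × (Fin dbar → ℤ) → ℤ := fun q =>
    mcoeff (Apoly (rhoMin (dualCone C) (castR q.1)) (rhoPerp (dualCone C) (castR q.2))
        dbar (Bq q.1 q.2))
      ((((dbar : ℤ) - 2 * r) - a) - (pz q.1 mC - pz nC q.2 - r))
      (b - (-(pz q.1 mC) - pz nC q.2 - r)) with hg
  -- the termwise identity
  have key : ∀ p ∈ LambdaSet C, f p = (-1 : ℤ) ^ (dbar - 2 * r) * g (Prod.swap p) := by
    rintro ⟨m, n⟩ ⟨hm, hn, hmn⟩
    set ρm := rhoMin C (castR m) with hρm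
    set ρn := rhoPerp C (castR n) with hρn
    -- the perp face is a face containing m
    have hface_n : IsFaceOf C (C ∩ {x | pairR x (castR n) = 0}) := by
      refine ⟨pairL (castR n), fun x hx => ?_, ?_⟩
      · rw [pairL_apply]
        exact hn x hx
      · ext x
        simp only [Set.mem_inter_iff, Set.mem_setOf_eq, pairL_apply]
    have hm_in : castR m ∈ C ∩ {x | pairR x (castR n) = 0} := by
      refine ⟨hm, ?_⟩
      show pairR (castR m) (castR n) = 0
      rw [pairR_castR, hmn]
      norm_num
    have hsub : minFace C (castR m) ⊆ C ∩ {x | pairR x (castR n) = 0} :=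
      Set.sInter_subset_of_mem ⟨hface_n, hm_in⟩
    have hρmn : ρm ≤ ρn := by
      rw [hρm, hρn]
      exact Submodule.finrank_mono (Submodule.span_mono hsub)
    have hρn_le : ρn ≤ dbar := by
      rw [hρn]
      have h1 := Submodule.finrank_le
        (Submodule.span ℝ (C ∩ {x | pairR x (castR n) = 0}))
      rwa [Module.finrank_fin_fun] at h1
    -- dual dimension relations
    have hd1 : ρm + rhoPerp (dualCone C) (castR m) = dbar := by
      have hbd' : dualCone (coneGen (sD.image castR)) = C := by
        rw [← hD]
        exact hbid
      exact faceDim_add_faceDim (sD.image castR) C hD hbd' hm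
    have hd2 : rhoMin (dualCone C) (castR n) + ρn = dbar := by
      have h1 : dualCone (dualCone C) = coneGen (s.image castR) := by rw [hbid, hC]
      have h2 : dualCone (coneGen (s.image castR)) = dualCone C := by rw [← hC]
      have h3 := faceDim_add_faceDim (s.image castR) (dualCone C) h1 h2 hn
      rw [hbid] at h3
      exact h3
    have hrd1 : rhoPerp (dualCone C) (castR m) = dbar - ρm := by omega
    have hrd2 : rhoMin (dualCone C) (castR n) = dbar - ρn := by omega
    -- the reversal identity
    have hstar := star_identity hρmn hρn_le (hdual m n ⟨hm, hn, hmn⟩)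
    have hrev := mcoeff_reverse hstar
    have hsign : ((-1 : ℤ)) ^ (dbar - 2 * r) = (-1 : ℤ) ^ dbar := by
      have h5 : dbar = (dbar - 2 * r) + 2 * r := by omega
      rw [h5, pow_add]
      have : ((-1 : ℤ)) ^ (2 * r) = 1 := by
        rw [pow_mul]
        norm_num
      rw [this, mul_one]
      rw [← h5]
    rw [hf, hg]
    simp only [Prod.fst_swap, Prod.snd_swap]
    rw [hrd1, hrd2, hsign]
    have hi' : ((((dbar : ℤ) - 2 * r) - a) - (pz n mC - pz nC m - r))
        = (dbar : ℤ) - (a - (pz m nC - pz mC n - r)) := by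
      rw [pz_comm n mC, pz_comm nC m]
      ring
    have hj' : (b - (-(pz n mC) - pz nC m - r)) = (b - (-(pz m nC) - pz mC n - r)) := by
      rw [pz_comm n mC, pz_comm nC m]
      ring
    rw [hi', hj']
    exact hrev _ _
  -- assemble via the swap bijection
  have hrhs : EstCoeff r (dualCone C) mC nC Bq (((dbar : ℤ) - 2 * r) - a) b
      = ∑ᶠ p ∈ LambdaSet C, g (Prod.swap p) := by
    rw [EstCoeff, ← finsum_mem_image (Prod.swap_injective.injOn),
      ← hswap]
  have hlhs : EstCoeff r C nC mC Bp a b = ∑ᶠ p ∈ LambdaSet C, f p := rfl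
  rw [hlhs, hrhs]
  rcases Nat.even_or_odd (dbar - 2 * r) with he | ho
  · rw [he.neg_one_pow, one_mul]
    refine finsum_mem_congr rfl fun p hp => ?_
    rw [key p hp, he.neg_one_pow, one_mul]
  · rw [ho.neg_one_pow, neg_one_mul]
    rw [← finsum_mem_neg_int]
    refine finsum_mem_congr rfl fun p hp => ?_
    rw [key p hp, ho.neg_one_pow, neg_one_mul]
end
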